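/- arXiv:2001.06802 — 3 statements merged into one kernel-verified Lean document; each statement's English description precedes it below -/
import Mathlib

section
/- The cluster mutation map C_k^{(ε)} respects the skew-symmetric forms: B_T(C_k^{(ε)}(x'_e), C_k^{(ε)}(x'_f)) = B_{T'}(x'_e, x'_f) = ε'_{ef} for all e,f ∈ I, where B_T(x_e,x_f) = ε_{ef} and B_{T'}(x'_e,x'_f) = ε'_{ef}. -/
noncomputable section

/-- The positive part `[a]₊ = max(a,0)` of a real number. -/
def plusPart (a : ℝ) : ℝ := max a 0

/-- Matrix mutation at `k`: `ε'_{ef} = −ε_{ef}` if `k ∈ {e,f}`, and otherwise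
`ε'_{ef} = ε_{ef} + (|ε_{ek}|ε_{kf} + ε_{ek}|ε_{kf}|)/2`. -/
def mutMat {I : Type*} [DecidableEq I] (ε : I → I → ℝ) (k : I) : I → I → ℝ :=
  fun e f =>
    if e = k ∨ f = k then -ε e f
    else ε e f + (|ε e k| * ε k f + ε e k * |ε k f|) / 2

/-- The cluster mutation linear map `C_k^{(ϵ)}` from the mutated space (with basis
`bNew`) to the original space (with basis `bOld` and exchange matrix `ε`), sending
`x'_k ↦ −x_k` and `x'_e ↦ x_e + [ϵ ε_{ek}]₊ x_k` for `e ≠ k`. -/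
def mutMap {I : Type*} [Fintype I] [DecidableEq I]
    {M M' : Type*} [AddCommGroup M] [Module ℝ M] [AddCommGroup M'] [Module ℝ M']
    (bNew : Module.Basis I ℝ M') (bOld : Module.Basis I ℝ M)
    (ε : I → I → ℝ) (k : I) (ϵ : ℝ) : M' →ₗ[ℝ] M :=
  bNew.constr ℝ fun e =>
    if e = k then -(bOld k) else bOld e + plusPart (ϵ * ε e k) • bOld k


lemma plusPart_eq (x : ℝ) : plusPart x = (x + |x|) / 2 := by
  rcases abs_cases x with ⟨h1, h2⟩ | ⟨h1, h2⟩ <;>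
    simp [plusPart, max_eq_left, max_eq_right, h1] <;> linarith

lemma key (ϵ a b : ℝ) (hϵ : ϵ = 1 ∨ ϵ = -1) :
    plusPart (ϵ * a) * b + plusPart (ϵ * -b) * a = (|a| * b + a * |b|) / 2 := by
  rcases hϵ with rfl | rfl <;>
    simp [plusPart_eq, abs_neg] <;> ring

/-- `C_k^{(ϵ)}` respects the skew-symmetric forms:
`B_T(C_k^{(ϵ)} x'_e, C_k^{(ϵ)} x'_f) = B_{T'}(x'_e, x'_f) = ε'_{ef}`. -/
theorem mutMap_respects_forms
    {I : Type*} [Fintype I] [DecidableEq I]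
    {M M' : Type*} [AddCommGroup M] [Module ℝ M] [AddCommGroup M'] [Module ℝ M']
    (ε : I → I → ℝ) (hskew : ∀ e f, ε f e = -ε e f) (k : I)
    (ϵ : ℝ) (hϵ : ϵ = 1 ∨ ϵ = -1)
    (bT : Module.Basis I ℝ M) (bT' : Module.Basis I ℝ M')
    (BT : M →ₗ[ℝ] M →ₗ[ℝ] ℝ) (BT' : M' →ₗ[ℝ] M' →ₗ[ℝ] ℝ)
    (hBT : ∀ e f, BT (bT e) (bT f) = ε e f)
    (hBT' : ∀ e f, BT' (bT' e) (bT' f) = mutMat ε k e f) :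
    ∀ e f,
      BT ((mutMap bT' bT ε k ϵ) (bT' e)) ((mutMap bT' bT ε k ϵ) (bT' f)) =
        BT' (bT' e) (bT' f) ∧
      BT' (bT' e) (bT' f) = mutMat ε k e f := by
  have hkk : ε k k = 0 := by have := hskew k k; linarith
  intro e f
  refine ⟨?_, hBT' e f⟩
  rw [hBT' e f]
  simp only [mutMap, Module.Basis.constr_basis]
  by_cases he : e = k <;> by_cases hf : f = k <;>
    simp [he, hf, mutMat, hBT, hkk, map_add, map_smul, map_neg, LinearMap.add_apply,
      LinearMap.smul_apply, LinearMap.neg_apply, smul_eq_mul]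
  rw [show ε f k = -(ε k f) from hskew k f]
  have := key ϵ (ε e k) (ε k f) hϵ
  linarith
end
end

section
/- The square identity for cluster mutation matrices: assume ε_{ij} = 0 for distinct i,j ∈ I. Let T⁽⁰⁾ → T⁽¹⁾ → T⁽²⁾ → T⁽³⁾ → T⁽⁰⁾ be the seeds obtained by mutating at i, j, i, j in turn, with the exchange matrices transformed by the standard mutation rule at each step. Then the composition C⁽¹⁾C⁽²⁾C⁽³⁾C⁽⁴⁾ : V_{T⁽⁰⁾} → V_{T⁽⁰⁾} of the four mutation linear maps with signs +, +, −, − equals the identity. -/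
noncomputable section

lemma mutMap_apply {I : Type*} [Fintype I] [DecidableEq I]
    {M M' : Type*} [AddCommGroup M] [Module ℝ M] [AddCommGroup M'] [Module ℝ M']
    (bNew : Module.Basis I ℝ M') (bOld : Module.Basis I ℝ M)
    (ε : I → I → ℝ) (k : I) (ϵ : ℝ) (e : I) :
    mutMap bNew bOld ε k ϵ (bNew e)
      = if e = k then -(bOld k) else bOld e + plusPart (ϵ * ε e k) • bOld k := by
  rw [mutMap]; exact bNew.constr_basis ℝ _ e

lemma plusPart_zero : plusPart 0 = 0 := by simp [plusPart]

/-- The square identity: if `ε_{ij} = 0`, the composition of the four mutation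
linear maps (mutations at `i, j, i, j` with signs `+, +, −, −`) is the identity. -/
theorem mutMap_square_identity
    {I : Type*} [Fintype I] [DecidableEq I]
    {M : Type*} [AddCommGroup M] [Module ℝ M]
    (ε : I → I → ℝ) (hskew : ∀ e f, ε f e = -ε e f)
    (i j : I) (hij : i ≠ j) (h0 : ε i j = 0)
    (b : Module.Basis I ℝ M) :
    (mutMap b b ε i 1).comp
      ((mutMap b b (mutMat ε i) j 1).comp
        ((mutMap b b (mutMat (mutMat ε i) j) i (-1)).comp
          (mutMap b b (mutMat (mutMat (mutMat ε i) j) i) j (-1)))) = LinearMap.id := by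
  have hji : j ≠ i := hij.symm
  have hji0 : ε j i = 0 := by rw [hskew, h0, neg_zero]
  set ε1 := mutMat ε i with hε1
  set ε2 := mutMat ε1 j with hε2
  set ε3 := mutMat ε2 i with hε3
  -- entries
  have e1ij : ε1 i j = 0 := by simp [hε1, mutMat, h0]
  have e1ji : ε1 j i = 0 := by simp [hε1, mutMat, hji0]
  have e2ij : ε2 i j = 0 := by simp [hε2, mutMat, e1ij]
  have e2ji : ε2 j i = 0 := by simp [hε2, mutMat, e1ji]
  have e3ij : ε3 i j = 0 := by simp [hε3, mutMat, e2ij]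
  have e1ej : ∀ e, e ≠ i → e ≠ j → ε1 e j = ε e j := by
    intro e hei hej
    simp [hε1, mutMat, hei, hji, h0]
  have e2ei : ∀ e, e ≠ i → e ≠ j → ε2 e i = -ε e i := by
    intro e hei hej
    simp [hε2, mutMat, hej, hij, hji, e1ji, hε1, hei, hji0, h0]
  have e3ej : ∀ e, e ≠ i → e ≠ j → ε3 e j = -ε e j := by
    intro e hei hej
    simp [hε3, mutMat, hei, hij, hji, e2ij, hε2, hej, e1ej e hei hej, e1ij, e1ji]
  apply b.ext
  intro e
  simp only [LinearMap.comp_apply, LinearMap.id_apply]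
  by_cases hei : e = i
  · subst hei
    simp [mutMap_apply, hij, hji, e3ij, e1ij, h0, plusPart_zero]
  · by_cases hej : e = j
    · subst hej
      simp [mutMap_apply, hij, hji, e2ji, hji0, plusPart_zero]
    · simp only [mutMap_apply, hei, hej, if_false, if_true, e3ej e hei hej, e2ei e hei hej,
        e1ej e hei hej, e2ji, e1ij, hji0, h0, map_add, map_smul, map_neg,
        if_neg hji, if_neg hij, neg_mul, one_mul, neg_neg, mul_zero, plusPart_zero,
        zero_smul, add_zero, if_pos rfl]
      module
end
end

section
/- The pentagon identity for cluster mutation matrices: assume ε_{ij} = 1 for some i,j ∈ I. Let T⁽⁰⁾ → T⁽¹⁾ → ⋯ → T⁽⁵⁾ be the seeds obtained by mutating at i, j, i, j, i in turn. Then the composition C⁽¹⁾C⁽²⁾C⁽³⁾C⁽⁴⁾C⁽⁵⁾ : V_{T⁽⁵⁾} → V_{T⁽⁰⁾} of the five mutation linear maps with signs +, +, −, −, − equals the transposition isomorphism C_{(ij)} sending x'_i ↦ x_j, x'_j ↦ x_i, and x'_e ↦ x_e for e ∉ {i,j}. -/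
noncomputable section

set_option maxHeartbeats 4000000 in
/-- The pentagon identity: if `ε_{ij} = 1`, the composition of the five mutation
linear maps (mutations at `i, j, i, j, i` with signs `+, +, −, −, −`) equals the
transposition isomorphism `C_{(ij)}` sending `x'_i ↦ x_j`, `x'_j ↦ x_i`, and
`x'_e ↦ x_e` for `e ∉ {i,j}`. -/
theorem mutMap_pentagon_identity
    {I : Type*} [Fintype I] [DecidableEq I]
    {M : Type*} [AddCommGroup M] [Module ℝ M]
    (ε : I → I → ℝ) (hskew : ∀ e f, ε f e = -ε e f)
    (i j : I) (hij : i ≠ j) (h1 : ε i j = 1)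
    (b : Module.Basis I ℝ M) :
    (mutMap b b ε i 1).comp
      ((mutMap b b (mutMat ε i) j 1).comp
        ((mutMap b b (mutMat (mutMat ε i) j) i (-1)).comp
          ((mutMap b b (mutMat (mutMat (mutMat ε i) j) i) j (-1)).comp
            (mutMap b b (mutMat (mutMat (mutMat (mutMat ε i) j) i) j) i (-1))))) =
      b.constr ℝ (fun e => b (Equiv.swap i j e)) := by
  have hji : ε j i = -1 := by rw [hskew, h1]
  have hji' : j ≠ i := hij.symm
  have ms : ∀ (η : I → I → ℝ) (k : I) (ϵ : ℝ), mutMap b b η k ϵ (b k) = -(b k) := by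
    intro η k ϵ; unfold mutMap; rw [Module.Basis.constr_basis]; simp
  have mn : ∀ (η : I → I → ℝ) (k : I) (ϵ : ℝ) (f : I), f ≠ k →
      mutMap b b η k ϵ (b f) = b f + plusPart (ϵ * η f k) • b k := by
    intro η k ϵ f hf; unfold mutMap; rw [Module.Basis.constr_basis]; simp [hf]
  have halfabs : ∀ x : ℝ, (|x| * 1 + x * |(1:ℝ)|) / 2 = plusPart x := by
    intro x; rcases le_total x 0 with h | h
    · rw [abs_of_nonpos h, abs_one, plusPart, max_eq_right h]; ring
    · rw [abs_of_nonneg h, abs_one, plusPart, max_eq_left h]; ring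
  have p1 : plusPart ((-1 : ℝ) * -1) = 1 := by norm_num [plusPart]
  have p2 : plusPart ((1 : ℝ) * -1) = 0 := by norm_num [plusPart]
  have p3 : plusPart ((-1 : ℝ) * 1) = 0 := by norm_num [plusPart]
  set η1 := mutMat ε i with hη1
  set η2 := mutMat η1 j with hη2
  set η3 := mutMat η2 i with hη3
  set η4 := mutMat η3 j with hη4
  have A1 : η1 i j = -1 := by rw [hη1]; simp [mutMat, h1]
  have B1 : η1 j i = 1 := by rw [hη1]; simp [mutMat, hji]
  have A2 : η2 i j = 1 := by rw [hη2]; simp [mutMat, A1]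
  have B2 : η2 j i = -1 := by rw [hη2]; simp [mutMat, B1]
  have A3 : η3 i j = -1 := by rw [hη3]; simp [mutMat, A2]
  have B3 : η3 j i = 1 := by rw [hη3]; simp [mutMat, B2]
  have A4 : η4 i j = 1 := by rw [hη4]; simp [mutMat, A3]
  have B4 : η4 j i = -1 := by rw [hη4]; simp [mutMat, B3]
  have c3i := ms η2 i (-1)
  have c3j := mn η2 i (-1) j hji'
  have c4i := mn η3 j (-1) i hij
  have c5i := ms η4 i (-1)
  have c5j := mn η4 i (-1) j hji'
  have c4j := ms η3 j (-1)
  have c2i := mn η1 j 1 i hij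
  have c2j := ms η1 j 1
  have c1i := ms ε i 1
  have c1j := mn ε i 1 j hji'
  apply b.ext
  intro e
  simp only [LinearMap.comp_apply, Module.Basis.constr_basis]
  by_cases he : e = i
  · rw [he, Equiv.swap_apply_left]
    simp only [c5i, c4i, c3i, c3j, c2i, c2j, c1i, c1j, A3, B2, A1, hji,
      map_add, map_smul, map_neg, p1, p2, one_smul, zero_smul, smul_neg,
      neg_neg, add_zero, smul_add]
    module
  by_cases he' : e = j
  · rw [he', Equiv.swap_apply_right]
    simp only [c5j, c4j, c4i, c3i, c3j, c2i, c2j, c1i, c1j, B4, A3, B2, A1, hji,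
      map_add, map_smul, map_neg, p1, p2, p3, one_smul, zero_smul, smul_neg,
      neg_neg, add_zero, smul_add]
    module
  · have E1ei : η1 e i = -(ε e i) := by rw [hη1]; simp [mutMat, he]
    have E1ej : η1 e j = ε e j + plusPart (ε e i) := by
      rw [hη1]; simp only [mutMat, if_neg (by tauto : ¬(e = i ∨ j = i))]
      rw [h1, halfabs]
    have E2ej : η2 e j = -(η1 e j) := by rw [hη2]; simp [mutMat, he']
    have E2ei : η2 e i = η1 e i + plusPart (η1 e j) := by
      rw [hη2]; simp only [mutMat, if_neg (by tauto : ¬(e = j ∨ i = j))]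
      rw [B1, halfabs]
    have E3ei : η3 e i = -(η2 e i) := by rw [hη3]; simp [mutMat, he]
    have E3ej : η3 e j = η2 e j + plusPart (η2 e i) := by
      rw [hη3]; simp only [mutMat, if_neg (by tauto : ¬(e = i ∨ j = i))]
      rw [A2, halfabs]
    have E4ei : η4 e i = η3 e i + plusPart (η3 e j) := by
      rw [hη4]; simp only [mutMat, if_neg (by tauto : ¬(e = j ∨ i = j))]
      rw [B3, halfabs]
    have c5e := mn η4 i (-1) e he
    have c4e := mn η3 j (-1) e he'
    have c3e := mn η2 i (-1) e he
    have c2e := mn η1 j 1 e he'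
    have c1e := mn ε i 1 e he
    rw [Equiv.swap_apply_of_ne_of_ne he he']
    simp only [c5e, c4e, c4i, c3e, c3i, c3j, c2e, c2i, c2j, c1e, c1i, c1j,
      A3, B2, A1, hji, map_add, map_smul, map_neg, p1, p2, one_smul, zero_smul,
      smul_neg, neg_neg, add_zero, smul_add,
      E4ei, E3ei, E3ej, E2ei, E2ej, E1ei, E1ej]
    generalize ε e i = a
    generalize ε e j = c
    match_scalars <;>
    first
    | rfl
    | (simp only [plusPart, max_def, neg_mul, one_mul, mul_one, neg_neg]
       split_ifs <;> linarith)
end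
end
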